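/- arXiv:2408.08053 — 3 statements merged into one kernel-verified Lean document; each statement's English description precedes it below -/
import Mathlib

section
/- Let m, n ≥ 3 be integers and let Ā be the cyclic transfer matrix for width m. Then the domination polynomial of the m×n torus graph satisfies G_{m̄×n̄}(z) = Tr(Ā^n). -/
open scoped Classical
open Polynomial

/-- The three possible states of a vertex relative to a vertex subset. -/
inductive VState : Type
  | unc | cov | occ
  deriving DecidableEq

instance : Fintype VState :=
  Fintype.ofList [VState.unc, VState.cov, VState.occ] (by intro x; cases x <;> simp)

/-- `S` is a dominating set of `G`: every vertex is in `S` or adjacent to a vertex of `S`. -/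
def IsDominating {V : Type*} (G : SimpleGraph V) (S : Finset V) : Prop :=
  ∀ v : V, v ∈ S ∨ ∃ u ∈ S, G.Adj u v

/-- The domination polynomial of `G`. -/
noncomputable def domPoly {V : Type*} [Fintype V] (G : SimpleGraph V) : Polynomial ℤ :=
  ∑ S ∈ Finset.univ.filter (fun S : Finset V => IsDominating G S),
    (X : Polynomial ℤ) ^ S.card

/-- The m×n torus graph `C_m □ C_n`. -/
def torusGraph (m n : ℕ) : SimpleGraph (Fin m × Fin n) :=
  (SimpleGraph.cycleGraph m).boxProd (SimpleGraph.cycleGraph n)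

/-- A signature of length `m`: a string over {unc, cov, occ} with no adjacent
(unc, occ) or (occ, unc) pair. -/
def IsSignature {m : ℕ} (σ : Fin m → VState) : Prop :=
  ∀ i : Fin m, ∀ h : (i : ℕ) + 1 < m,
    ¬(σ i = VState.unc ∧ σ ⟨(i : ℕ) + 1, h⟩ = VState.occ) ∧
    ¬(σ i = VState.occ ∧ σ ⟨(i : ℕ) + 1, h⟩ = VState.unc)

/-- A cyclic signature: a signature where the adjacency constraint is also imposed
on the pair (first symbol, last symbol). -/
def IsCycSignature {m : ℕ} (σ : Fin m → VState) : Prop :=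
  IsSignature σ ∧ ∀ h : 0 < m,
    ¬(σ ⟨0, h⟩ = VState.unc ∧ σ ⟨m - 1, Nat.sub_lt h Nat.one_pos⟩ = VState.occ) ∧
    ¬(σ ⟨0, h⟩ = VState.occ ∧ σ ⟨m - 1, Nat.sub_lt h Nat.one_pos⟩ = VState.unc)

/-- The cyclic successor of an index (mod `m`). -/
def cycNext {m : ℕ} (i : Fin m) : Fin m := ⟨((i : ℕ) + 1) % m, Nat.mod_lt _ i.pos⟩

/-- The cyclic predecessor of an index (mod `m`). -/
def cycPrev {m : ℕ} (i : Fin m) : Fin m := ⟨((i : ℕ) + (m - 1)) % m, Nat.mod_lt _ i.pos⟩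

/-- `τ` is (cyclically) compatible with `σ`, indices taken mod `m`. -/
def CompatibleCyc {m : ℕ} (τ σ : Fin m → VState) : Prop :=
  ∀ i : Fin m,
    (σ i = VState.unc → τ i = VState.occ) ∧
    (σ i = VState.occ → τ i = VState.cov ∨ τ i = VState.occ) ∧
    (τ i = VState.cov → σ i = VState.occ ∨
      τ (cycPrev i) = VState.occ ∨ τ (cycNext i) = VState.occ)

/-- The number of occupied symbols of a signature. -/
def occCount {m : ℕ} (σ : Fin m → VState) : ℕ :=
  (Finset.univ.filter fun i => σ i = VState.occ).card

/-- The type of cyclic signatures of length `m`. -/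
abbrev CycSignature (m : ℕ) := {σ : Fin m → VState // IsCycSignature σ}

/-- The cyclic transfer matrix for width `m`, over ℤ[z], indexed by cyclic signatures. -/
noncomputable def cycTransferMatrix (m : ℕ) :
    Matrix (CycSignature m) (CycSignature m) (Polynomial ℤ) :=
  fun τ σ =>
    if CompatibleCyc τ.1 σ.1 then (X : Polynomial ℤ) ^ occCount τ.1 else 0


section idx
variable {m : ℕ}

lemma cycNext_eq_add_one [NeZero m] (i : Fin m) : cycNext i = i + 1 := by
  apply Fin.ext
  rw [Fin.add_def, Fin.val_one']
  simp only [cycNext]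
  rw [Nat.add_mod i.val 1 m, Nat.mod_eq_of_lt i.isLt]

lemma cycPrev_eq_sub_one [NeZero m] (i : Fin m) : cycPrev i = i - 1 := by
  apply Fin.ext
  rw [Fin.sub_def, Fin.val_one']
  simp only [cycPrev]
  have := i.isLt
  have hm : 0 < m := Fin.pos i
  rcases Nat.lt_or_ge 1 m with h | h
  · rw [Nat.mod_eq_of_lt h, Nat.add_comm]
  · have hm1 : m = 1 := by omega
    subst hm1
    omega

lemma cycNext_cycPrev [NeZero m] (i : Fin m) : cycNext (cycPrev i) = i := by
  rw [cycNext_eq_add_one, cycPrev_eq_sub_one, sub_add_cancel]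

lemma cycPrev_cycNext [NeZero m] (i : Fin m) : cycPrev (cycNext i) = i := by
  rw [cycNext_eq_add_one, cycPrev_eq_sub_one, add_sub_cancel_right]

lemma cycNext_of_lt {i : Fin m} (h : (i : ℕ) + 1 < m) : cycNext i = ⟨(i : ℕ) + 1, h⟩ := by
  apply Fin.ext; simp [cycNext, Nat.mod_eq_of_lt h]

lemma cycNext_last (hm : 0 < m) : cycNext (⟨m - 1, Nat.sub_lt hm Nat.one_pos⟩ : Fin m) = ⟨0, hm⟩ := by
  apply Fin.ext; simp [cycNext, Nat.sub_add_cancel hm]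

lemma cycPrev_of_lt {i : Fin m} (h : (i : ℕ) + 1 < m) : cycPrev ⟨(i : ℕ) + 1, h⟩ = i := by
  apply Fin.ext
  simp only [cycPrev]
  have : (i : ℕ) + 1 + (m - 1) = m + (i : ℕ) := by omega
  rw [this, Nat.add_mod_left, Nat.mod_eq_of_lt i.isLt]

lemma cycPrev_zero (hm : 0 < m) : cycPrev (⟨0, hm⟩ : Fin m) = ⟨m - 1, Nat.sub_lt hm Nat.one_pos⟩ := by
  apply Fin.ext
  simp [cycPrev, Nat.mod_eq_of_lt (show m - 1 < m by omega)]

lemma cycleGraph_adj_iff (hm : 3 ≤ m) (u v : Fin m) :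
    (SimpleGraph.cycleGraph m).Adj u v ↔ v = cycNext u ∨ v = cycPrev u := by
  obtain ⟨k, rfl⟩ : ∃ k, m = k + 2 := ⟨m - 2, by omega⟩
  rw [SimpleGraph.cycleGraph_adj, cycNext_eq_add_one, cycPrev_eq_sub_one]
  constructor
  · rintro (h | h)
    · right
      have : u - v + v = 1 + v := by rw [h]
      rw [sub_add_cancel] at this
      rw [this]; abel
    · left
      have : v - u + u = 1 + u := by rw [h]
      rw [sub_add_cancel] at this
      rw [this]; abel
  · rintro (rfl | rfl)
    · right; rw [add_sub_cancel_left]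
    · left; rw [sub_sub_cancel]
end idx

/-! ### signature helpers -/

section sig
variable {m : ℕ} {σ : Fin m → VState}

lemma IsCycSignature.next_pair (hσ : IsCycSignature σ) (i : Fin m) :
    ¬(σ i = VState.unc ∧ σ (cycNext i) = VState.occ) ∧
    ¬(σ i = VState.occ ∧ σ (cycNext i) = VState.unc) := by
  rcases Nat.lt_or_ge ((i : ℕ) + 1) m with h | h
  · rw [cycNext_of_lt h]; exact hσ.1 i h
  · have h0 : 0 < m := i.pos
    have hi : i = ⟨m - 1, Nat.sub_lt h0 Nat.one_pos⟩ := Fin.ext (by have := i.isLt; simp; omega)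
    rw [hi, cycNext_last h0]
    have h2 := hσ.2 h0
    tauto

lemma IsCycSignature.prev_pair (hσ : IsCycSignature σ) (i : Fin m) :
    ¬(σ i = VState.unc ∧ σ (cycPrev i) = VState.occ) ∧
    ¬(σ i = VState.occ ∧ σ (cycPrev i) = VState.unc) := by
  have : NeZero m := ⟨Nat.pos_iff_ne_zero.mp i.pos⟩
  have h2 := hσ.next_pair (cycPrev i)
  rw [cycNext_cycPrev] at h2
  tauto
end sig

/-! ### column states -/

section dom
variable {m n : ℕ}

noncomputable def colState (S : Finset (Fin m × Fin n)) (j : Fin n) (i : Fin m) : VState :=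
  if (i, j) ∈ S then VState.occ
  else if (i, cycNext j) ∈ S ∨ (cycNext i, j) ∈ S ∨ (cycPrev i, j) ∈ S then VState.cov
  else VState.unc

lemma colState_eq_occ_iff {S : Finset (Fin m × Fin n)} {j : Fin n} {i : Fin m} :
    colState S j i = VState.occ ↔ (i, j) ∈ S := by
  unfold colState; split_ifs <;> simp_all

lemma colState_eq_cov_iff {S : Finset (Fin m × Fin n)} {j : Fin n} {i : Fin m} :
    colState S j i = VState.cov ↔
      (i, j) ∉ S ∧ ((i, cycNext j) ∈ S ∨ (cycNext i, j) ∈ S ∨ (cycPrev i, j) ∈ S) := by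
  unfold colState; split_ifs <;> simp_all

lemma colState_eq_unc_iff {S : Finset (Fin m × Fin n)} {j : Fin n} {i : Fin m} :
    colState S j i = VState.unc ↔
      (i, j) ∉ S ∧ (i, cycNext j) ∉ S ∧ (cycNext i, j) ∉ S ∧ (cycPrev i, j) ∉ S := by
  unfold colState; split_ifs <;> simp_all <;> tauto

lemma colState_isCycSignature (S : Finset (Fin m × Fin n)) (j : Fin n) :
    IsCycSignature (colState S j) := by
  constructor
  · intro i h
    constructor
    · rintro ⟨h1, h2⟩
      rw [colState_eq_unc_iff] at h1
      rw [colState_eq_occ_iff] at h2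
      rw [← cycNext_of_lt h] at h2
      exact h1.2.2.1 h2
    · rintro ⟨h1, h2⟩
      rw [colState_eq_occ_iff] at h1
      rw [colState_eq_unc_iff] at h2
      rw [← cycPrev_of_lt h] at h1
      exact h2.2.2.2 h1
  · intro h0
    constructor
    · rintro ⟨h1, h2⟩
      rw [colState_eq_unc_iff] at h1
      rw [colState_eq_occ_iff] at h2
      rw [← cycPrev_zero h0] at h2
      exact h1.2.2.2 h2
    · rintro ⟨h1, h2⟩
      rw [colState_eq_occ_iff] at h1
      rw [colState_eq_unc_iff] at h2
      rw [← cycNext_last h0] at h1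
      exact h2.2.2.1 h1

lemma torus_adj (hm : 3 ≤ m) (hn : 3 ≤ n) (p q : Fin m × Fin n) :
    (torusGraph m n).Adj p q ↔
      ((q.1 = cycNext p.1 ∨ q.1 = cycPrev p.1) ∧ p.2 = q.2) ∨
      (p.1 = q.1 ∧ (q.2 = cycNext p.2 ∨ q.2 = cycPrev p.2)) := by
  rw [torusGraph, SimpleGraph.boxProd_adj, cycleGraph_adj_iff hm, cycleGraph_adj_iff hn]
  tauto
end dom

section dom2
variable {m n : ℕ}

noncomputable def occSet (f : Fin n → CycSignature m) : Finset (Fin m × Fin n) :=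
  Finset.univ.filter fun p => (f p.2).1 p.1 = VState.occ

lemma mem_occSet {f : Fin n → CycSignature m} {p : Fin m × Fin n} :
    p ∈ occSet f ↔ (f p.2).1 p.1 = VState.occ := by
  simp [occSet]

lemma colState_compat (hm : 3 ≤ m) (hn : 3 ≤ n) {S : Finset (Fin m × Fin n)}
    (hS : IsDominating (torusGraph m n) S) (j : Fin n) :
    CompatibleCyc (colState S j) (colState S (cycNext j)) := by
  have hNm : NeZero m := ⟨by omega⟩
  have hNn : NeZero n := ⟨by omega⟩
  intro i
  refine ⟨?_, ?_, ?_⟩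
  · intro h
    rw [colState_eq_unc_iff] at h
    rw [colState_eq_occ_iff]
    rcases hS (i, cycNext j) with hmem | ⟨u, huS, hadj⟩
    · exact absurd hmem h.1
    · rw [torus_adj hm hn] at hadj
      dsimp only at hadj
      rcases hadj with ⟨h1 | h1, h2⟩ | ⟨h1, h2 | h2⟩
      · -- i = cycNext u.1, u.2 = cycNext j, so u = (cycPrev i, cycNext j)
        exfalso
        apply h.2.2.2
        have : u.1 = cycPrev i := by rw [h1, cycPrev_cycNext]
        have hu : u = (cycPrev i, cycNext j) := Prod.ext this h2
        rwa [hu] at huS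
      · exfalso
        apply h.2.2.1
        have : u.1 = cycNext i := by rw [h1, cycNext_cycPrev]
        have hu : u = (cycNext i, cycNext j) := Prod.ext this h2
        rwa [hu] at huS
      · -- u.1 = i, cycNext j = cycNext u.2 → u.2 = j
        have hu2 : u.2 = j := by
          have h3 := congrArg cycPrev h2
          rw [cycPrev_cycNext, cycPrev_cycNext] at h3
          exact h3.symm
        have hu : u = (i, j) := Prod.ext h1 hu2
        rwa [hu] at huS
      · -- cycNext j = cycPrev u.2 → u.2 = cycNext (cycNext j)
        exfalso
        apply h.2.1
        have hu2 : u.2 = cycNext (cycNext j) := by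
          have h3 := congrArg cycNext h2
          rw [cycNext_cycPrev] at h3
          exact h3.symm
        have hu : u = (i, cycNext (cycNext j)) := Prod.ext h1 hu2
        rwa [hu] at huS
  · intro h
    rw [colState_eq_occ_iff] at h
    by_cases hij : (i, j) ∈ S
    · right; rw [colState_eq_occ_iff]; exact hij
    · left; rw [colState_eq_cov_iff]; exact ⟨hij, Or.inl h⟩
  · intro h
    rw [colState_eq_cov_iff] at h
    rcases h.2 with h1 | h1 | h1
    · left; rw [colState_eq_occ_iff]; exact h1
    · right; right; rw [colState_eq_occ_iff]; exact h1
    · right; left; rw [colState_eq_occ_iff]; exact h1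

lemma occSet_dominating (hm : 3 ≤ m) (hn : 3 ≤ n) (f : Fin n → CycSignature m)
    (hf : ∀ j, CompatibleCyc (f j).1 (f (cycNext j)).1) :
    IsDominating (torusGraph m n) (occSet f) := by
  have hNm : NeZero m := ⟨by omega⟩
  have hNn : NeZero n := ⟨by omega⟩
  rintro ⟨i, j⟩
  rcases hstate : (f j).1 i with _ | _ | _
  · -- unc
    right
    have hcomp := hf (cycPrev j) i
    rw [cycNext_cycPrev] at hcomp
    have hocc := hcomp.1 hstate
    refine ⟨(i, cycPrev j), mem_occSet.mpr hocc, ?_⟩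
    rw [torus_adj hm hn]
    right
    exact ⟨rfl, Or.inl (cycNext_cycPrev j).symm⟩
  · -- cov
    right
    rcases (hf j i).2.2 hstate with h1 | h1 | h1
    · refine ⟨(i, cycNext j), mem_occSet.mpr h1, ?_⟩
      rw [torus_adj hm hn]
      right
      exact ⟨rfl, Or.inr (cycPrev_cycNext j).symm⟩
    · refine ⟨(cycPrev i, j), mem_occSet.mpr h1, ?_⟩
      rw [torus_adj hm hn]
      left
      exact ⟨Or.inl (cycNext_cycPrev i).symm, rfl⟩
    · refine ⟨(cycNext i, j), mem_occSet.mpr h1, ?_⟩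
      rw [torus_adj hm hn]
      left
      exact ⟨Or.inr (cycPrev_cycNext i).symm, rfl⟩
  · -- occ
    left
    exact mem_occSet.mpr hstate

lemma colState_occSet (hm : 3 ≤ m) (hn : 3 ≤ n) (f : Fin n → CycSignature m)
    (hf : ∀ j, CompatibleCyc (f j).1 (f (cycNext j)).1) (j : Fin n) (i : Fin m) :
    colState (occSet f) j i = (f j).1 i := by
  have hNm : NeZero m := ⟨by omega⟩
  have hNn : NeZero n := ⟨by omega⟩
  rcases hstate : (f j).1 i with _ | _ | _
  · rw [colState_eq_unc_iff]
    refine ⟨?_, ?_, ?_, ?_⟩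
    · rw [mem_occSet]; simp only; rw [hstate]; simp
    · rw [mem_occSet]; simp only
      intro hocc
      rcases (hf j i).2.1 hocc with h | h <;> rw [hstate] at h <;> exact absurd h (by simp)
    · rw [mem_occSet]; simp only
      intro hocc
      exact ((f j).2.next_pair i).1 ⟨hstate, hocc⟩
    · rw [mem_occSet]; simp only
      intro hocc
      exact ((f j).2.prev_pair i).1 ⟨hstate, hocc⟩
  · rw [colState_eq_cov_iff]
    constructor
    · rw [mem_occSet]; simp only; rw [hstate]; simp
    · rcases (hf j i).2.2 hstate with h1 | h1 | h1
      · exact Or.inl (mem_occSet.mpr h1)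
      · exact Or.inr (Or.inr (mem_occSet.mpr h1))
      · exact Or.inr (Or.inl (mem_occSet.mpr h1))
  · rw [colState_eq_occ_iff, mem_occSet]
    exact hstate

lemma occSet_colState (S : Finset (Fin m × Fin n)) :
    occSet (fun j => (⟨colState S j, colState_isCycSignature S j⟩ : CycSignature m)) = S := by
  ext p
  rw [mem_occSet]
  exact colState_eq_occ_iff

lemma occSet_card (f : Fin n → CycSignature m) :
    (occSet f).card = ∑ j : Fin n, occCount (f j).1 := by
  rw [occSet, Finset.card_eq_sum_card_fiberwise
    (fun p _ => Finset.mem_univ p.2 : ∀ p ∈ Finset.univ.filter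
      fun p : Fin m × Fin n => (f p.2).1 p.1 = VState.occ, p.2 ∈ Finset.univ)]
  apply Finset.sum_congr rfl
  intro j _
  rw [occCount]
  apply Finset.card_bij (fun p _ => p.1)
  · intro p hp
    simp only [Finset.mem_filter, Finset.mem_univ, true_and] at hp ⊢
    rw [← hp.2]
    exact hp.1
  · intro p1 hp1 p2 hp2 hh
    simp only [Finset.mem_filter] at hp1 hp2
    exact Prod.ext hh (hp1.2.trans hp2.2.symm)
  · intro i hi
    simp only [Finset.mem_filter, Finset.mem_univ, true_and] at hi
    exact ⟨(i, j), by simp [Finset.mem_filter, hi], rfl⟩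
end dom2


section trace
variable {ι R : Type*} [Fintype ι] [DecidableEq ι] [CommRing R]

lemma pow_entry (A : Matrix ι ι R) (k : ℕ) (x y : ι) :
    (A ^ k) x y =
      ∑ g : Fin (k + 1) → ι,
        if g 0 = x ∧ g (Fin.last k) = y then
          ∏ j : Fin k, A (g j.castSucc) (g j.succ) else 0 := by
  induction k generalizing y with
  | zero =>
    rw [pow_zero]
    have e1 : ∀ g : Fin 1 → ι,
        (if g 0 = x ∧ g (Fin.last 0) = y then
          ∏ j : Fin 0, A (g j.castSucc) (g j.succ) else 0)
        = (fun z : ι => if z = x ∧ z = y then (1:R) else 0) ((Equiv.funUnique (Fin 1) ι) g) := by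
      intro g
      rw [Fin.prod_univ_zero]
      rfl
    rw [Finset.sum_congr rfl (fun g _ => e1 g),
      Equiv.sum_comp (Equiv.funUnique (Fin 1) ι)
        (fun z : ι => if z = x ∧ z = y then (1:R) else 0)]
    by_cases hxy : x = y
    · subst hxy
      rw [Matrix.one_apply_eq]
      have e2 : ∀ z : ι, (if z = x ∧ z = x then (1:R) else 0) = if z = x then (1:R) else 0 := by
        intro z; by_cases h : z = x <;> simp [h]
      rw [Finset.sum_congr rfl (fun z _ => e2 z),
        Finset.sum_ite_eq' Finset.univ x (fun _ => (1:R))]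
      simp
    · rw [Matrix.one_apply_ne hxy]
      have e2 : ∀ z : ι, (if z = x ∧ z = y then (1:R) else 0) = 0 := by
        intro z
        have h : ¬(z = x ∧ z = y) := by rintro ⟨rfl, rfl⟩; exact hxy rfl
        simp [h]
      rw [Finset.sum_congr rfl (fun z _ => e2 z), Finset.sum_const_zero]
  | succ k ih =>
    have key : ∀ z (g : Fin (k+1) → ι),
        (∏ j : Fin (k+1), A (Fin.snoc (α := fun _ => ι) g z j.castSucc)
            (Fin.snoc (α := fun _ => ι) g z j.succ))
          = (∏ j : Fin k, A (g j.castSucc) (g j.succ)) * A (g (Fin.last k)) z := by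
      intro z g
      rw [Fin.prod_univ_castSucc]
      congr 1
      · apply Finset.prod_congr rfl
        intro j _
        rw [Fin.snoc_castSucc, Fin.succ_castSucc, Fin.snoc_castSucc]
      · rw [Fin.snoc_castSucc, Fin.succ_last, Fin.snoc_last]
    have hM : ∀ y0 : ι, True := fun _ => trivial
    rw [pow_succ, Matrix.mul_apply]
    -- LHS = M
    have lhs_eq : (∑ z, (A ^ k) x z * A z y)
        = ∑ g : Fin (k+1) → ι, if g 0 = x then
            (∏ j : Fin k, A (g j.castSucc) (g j.succ)) * A (g (Fin.last k)) y else 0 := by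
      have : ∀ z, (A ^ k) x z * A z y
          = ∑ g : Fin (k+1) → ι, if g 0 = x then
              (if g (Fin.last k) = z then
                (∏ j : Fin k, A (g j.castSucc) (g j.succ)) * A z y else 0) else 0 := by
        intro z
        rw [ih, Finset.sum_mul]
        apply Finset.sum_congr rfl
        intro g _
        by_cases h1 : g 0 = x
        · by_cases h2 : g (Fin.last k) = z <;> simp [h1, h2]
        · simp [h1]
      rw [Finset.sum_congr rfl (fun z _ => this z), Finset.sum_comm]
      apply Finset.sum_congr rfl
      intro g _
      by_cases h1 : g 0 = x
      · simp only [h1, if_true]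
        rw [Finset.sum_ite_eq Finset.univ (g (Fin.last k))
          (fun z => (∏ j : Fin k, A (g j.castSucc) (g j.succ)) * A z y)]
        simp
      · simp [h1]
    rw [lhs_eq]
    -- RHS = M
    rw [← (Fin.snocEquiv (fun _ : Fin (k + 2) => ι)).sum_comp]
    rw [Fintype.sum_prod_type]
    have rhs_eq : ∀ z (g : Fin (k+1) → ι),
        (if Fin.snocEquiv (fun _ : Fin (k + 2) => ι) (z, g) 0 = x ∧
            Fin.snocEquiv (fun _ : Fin (k + 2) => ι) (z, g) (Fin.last (k+1)) = y then
          ∏ j : Fin (k+1), A (Fin.snocEquiv (fun _ : Fin (k + 2) => ι) (z, g) j.castSucc)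
            (Fin.snocEquiv (fun _ : Fin (k + 2) => ι) (z, g) j.succ) else 0)
        = if z = y then (if g 0 = x then
            (∏ j : Fin k, A (g j.castSucc) (g j.succ)) * A (g (Fin.last k)) z else 0) else 0 := by
      intro z g
      have he : ∀ i, Fin.snocEquiv (fun _ : Fin (k + 2) => ι) (z, g) i
          = Fin.snoc (α := fun _ => ι) g z i := fun i => rfl
      simp only [he]
      have h0 : Fin.snoc (α := fun _ => ι) g z 0 = g 0 := by
        have h0' : (0 : Fin (k+2)) = Fin.castSucc 0 := rfl
        rw [h0', Fin.snoc_castSucc]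
      rw [h0, Fin.snoc_last, key]
      by_cases h1 : g 0 = x
      · by_cases hzy : z = y <;> simp [h1, hzy, and_comm]
      · simp [h1]
    rw [Finset.sum_congr rfl (fun z _ => Finset.sum_congr rfl (fun g _ => rhs_eq z g))]
    have step : ∀ z : ι, (∑ g : Fin (k+1) → ι, if z = y then (if g 0 = x then
          (∏ j : Fin k, A (g j.castSucc) (g j.succ)) * A (g (Fin.last k)) z else 0) else 0)
        = if z = y then (∑ g : Fin (k+1) → ι, if g 0 = x then
          (∏ j : Fin k, A (g j.castSucc) (g j.succ)) * A (g (Fin.last k)) z else 0) else 0 := by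
      intro z
      by_cases hz : z = y <;> simp [hz]
    rw [Finset.sum_congr rfl (fun z _ => step z)]
    rw [Finset.sum_ite_eq' Finset.univ y (fun z => ∑ g : Fin (k+1) → ι, if g 0 = x then
          (∏ j : Fin k, A (g j.castSucc) (g j.succ)) * A (g (Fin.last k)) z else 0)]
    simp

lemma trace_pow_eq (A : Matrix ι ι R) (k : ℕ) :
    Matrix.trace (A ^ (k + 1)) =
      ∑ f : Fin (k + 1) → ι, ∏ j : Fin (k + 1), A (f j) (f (j + 1)) := by
  have snoc_succ : ∀ (f : Fin (k+1) → ι) (j : Fin (k+1)),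
      Fin.snoc (α := fun _ => ι) f (f 0) j.succ = f (j + 1) := by
    intro f j
    rcases Nat.lt_or_ge ((j : ℕ) + 1) (k + 1) with h | h
    · have h1 : j.succ = Fin.castSucc ⟨(j : ℕ) + 1, h⟩ := by
        apply Fin.ext; simp
      have h2 : (j + 1 : Fin (k+1)) = ⟨(j : ℕ) + 1, h⟩ := by
        apply Fin.ext
        rw [Fin.add_def, Fin.val_one']
        simp [Nat.mod_eq_of_lt (show 1 < k + 1 by omega), Nat.mod_eq_of_lt h]
      rw [h1, Fin.snoc_castSucc, h2]
    · have hj : (j : ℕ) = k := by have := j.isLt; omega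
      have h1 : j.succ = Fin.last (k + 1) := by apply Fin.ext; simp [hj]
      have h2 : (j + 1 : Fin (k+1)) = 0 := by
        apply Fin.ext
        rw [Fin.add_def, Fin.val_one']
        simp [hj]
      rw [h1, Fin.snoc_last, h2]
  have snoc_cast : ∀ (f : Fin (k+1) → ι) (j : Fin (k+1)),
      Fin.snoc (α := fun _ => ι) f (f 0) j.castSucc = f j := fun f j => Fin.snoc_castSucc ..
  rw [Matrix.trace]
  simp only [Matrix.diag]
  rw [Finset.sum_congr rfl (fun x (_ : x ∈ Finset.univ) => pow_entry A (k+1) x x)]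
  rw [Finset.sum_comm]
  have collapse : ∀ g : Fin (k+2) → ι,
      (∑ x : ι, if g 0 = x ∧ g (Fin.last (k+1)) = x then
        ∏ j : Fin (k+1), A (g j.castSucc) (g j.succ) else 0)
      = if g (Fin.last (k+1)) = g 0 then
          ∏ j : Fin (k+1), A (g j.castSucc) (g j.succ) else 0 := by
    intro g
    have : ∀ x : ι, (if g 0 = x ∧ g (Fin.last (k+1)) = x then
        ∏ j : Fin (k+1), A (g j.castSucc) (g j.succ) else 0)
        = if g 0 = x then (if g (Fin.last (k+1)) = g 0 then
            ∏ j : Fin (k+1), A (g j.castSucc) (g j.succ) else 0) else 0 := by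
      intro x
      by_cases h1 : g 0 = x
      · subst h1; simp
      · simp [h1]
    rw [Finset.sum_congr rfl (fun x _ => this x)]
    rw [Finset.sum_ite_eq Finset.univ (g 0) (fun _ => if g (Fin.last (k+1)) = g 0 then
        ∏ j : Fin (k+1), A (g j.castSucc) (g j.succ) else 0)]
    simp
  rw [Finset.sum_congr rfl (fun g _ => collapse g)]
  rw [← (Fin.snocEquiv (fun _ : Fin (k + 2) => ι)).sum_comp]
  rw [Fintype.sum_prod_type]
  have inner : ∀ (f : Fin (k+1) → ι),
      (∑ z : ι, if Fin.snocEquiv (fun _ : Fin (k + 2) => ι) (z, f) (Fin.last (k+1))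
          = Fin.snocEquiv (fun _ : Fin (k + 2) => ι) (z, f) 0 then
        ∏ j : Fin (k+1), A (Fin.snocEquiv (fun _ : Fin (k + 2) => ι) (z, f) j.castSucc)
          (Fin.snocEquiv (fun _ : Fin (k + 2) => ι) (z, f) j.succ) else 0)
      = ∏ j : Fin (k+1), A (f j) (f (j + 1)) := by
    intro f
    have he : ∀ z i, Fin.snocEquiv (fun _ : Fin (k + 2) => ι) (z, f) i
        = Fin.snoc (α := fun _ => ι) f z i := fun _ _ => rfl
    simp only [he]
    have h0 : ∀ z : ι, Fin.snoc (α := fun _ => ι) f z 0 = f 0 := by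
      intro z
      have h0' : (0 : Fin (k+2)) = Fin.castSucc 0 := rfl
      rw [h0', Fin.snoc_castSucc]
    simp only [Fin.snoc_last, h0]
    rw [Finset.sum_ite_eq' Finset.univ (f 0) (fun z =>
      ∏ j : Fin (k+1), A (Fin.snoc (α := fun _ => ι) f z j.castSucc)
        (Fin.snoc (α := fun _ => ι) f z j.succ))]
    simp only [Finset.mem_univ, if_true]
    apply Finset.prod_congr rfl
    intro j _
    rw [snoc_cast, snoc_succ]
  rw [Finset.sum_comm]
  exact Finset.sum_congr rfl (fun f _ => inner f)
end trace

lemma prod_transfer {m k : ℕ} (f : Fin (k + 1) → CycSignature m) :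
    (∏ j : Fin (k + 1), cycTransferMatrix m (f j) (f (j + 1)))
      = if (∀ j, CompatibleCyc (f j).1 (f (j + 1)).1)
        then (X : Polynomial ℤ) ^ (∑ j, occCount (f j).1) else 0 := by
  by_cases h : ∀ j, CompatibleCyc (f j).1 (f (j + 1)).1
  · rw [if_pos h]
    have hh : ∀ j : Fin (k + 1), cycTransferMatrix m (f j) (f (j + 1))
        = (X : Polynomial ℤ) ^ occCount (f j).1 := by
      intro j
      simp only [cycTransferMatrix]
      exact if_pos (h j)
    rw [Finset.prod_congr rfl (fun j _ => hh j), Finset.prod_pow_eq_pow_sum]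
  · rw [if_neg h]
    push_neg at h
    obtain ⟨j0, hj0⟩ := h
    apply Finset.prod_eq_zero (Finset.mem_univ j0)
    simp only [cycTransferMatrix]
    exact if_neg hj0


/-- The domination polynomial of the m×n torus equals the trace of the n-th power of the
cyclic transfer matrix for width m. -/
theorem torus_domPoly_eq_trace_transferMatrix_pow (m n : ℕ) (hm : 3 ≤ m) (hn : 3 ≤ n) :
    domPoly (torusGraph m n) = Matrix.trace (cycTransferMatrix m ^ n) := by
  have hNm : NeZero m := ⟨by omega⟩
  have hNn : NeZero n := ⟨by omega⟩
  obtain ⟨k, rfl⟩ : ∃ k, n = k + 1 := ⟨n - 1, by omega⟩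
  rw [trace_pow_eq]
  rw [Finset.sum_congr rfl (fun f (_ : f ∈ Finset.univ) => prod_transfer f)]
  rw [← Finset.sum_filter]
  rw [domPoly]
  have hconv : ∀ f : Fin (k + 1) → CycSignature m,
      (∀ j, CompatibleCyc (f j).1 (f (j + 1)).1) ↔
        (∀ j, CompatibleCyc (f j).1 (f (cycNext j)).1) := by
    intro f
    constructor <;> intro h j
    · rw [cycNext_eq_add_one]; exact h j
    · rw [← cycNext_eq_add_one]; exact h j
  apply Finset.sum_bij'
    (i := fun S _ => fun j => (⟨colState S j, colState_isCycSignature S j⟩ : CycSignature m))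
    (j := fun f _ => occSet f)
  · -- hi
    intro S hS
    rw [Finset.mem_filter] at hS ⊢
    refine ⟨Finset.mem_univ _, ?_⟩
    rw [hconv]
    exact fun j => colState_compat hm hn hS.2 j
  · -- hj
    intro f hf
    rw [Finset.mem_filter] at hf ⊢
    refine ⟨Finset.mem_univ _, ?_⟩
    exact occSet_dominating hm hn f ((hconv f).mp hf.2)
  · -- left_inv
    intro S hS
    exact occSet_colState S
  · -- right_inv
    intro f hf
    rw [Finset.mem_filter] at hf
    funext j
    apply Subtype.ext
    funext i
    exact colState_occSet hm hn f ((hconv f).mp hf.2) j i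
  · -- h
    intro S hS
    congr 1
    conv_lhs => rw [← occSet_colState S]
    rw [occSet_card]
end

section
/- Fix an integer c ≥ 2, and for m ≥ 1 let a_c(m) denote the number of kinked signatures of length m with kink at position c. Then for all m ≥ 3: if m = c then a_c(m) = 3·a_c(m−1), and if m ≠ c then a_c(m) = 2·a_c(m−1) + a_c(m−2). -/
open scoped Classical

/-- A kinked signature of length `m` with kink at (1-based) position `c`: the usual
adjacency constraint of signatures (no adjacent (unc, occ) or (occ, unc) pair) is imposed
at every adjacent pair of positions except between positions `c−1` and `c`
(in 0-based indices, except at the pair `(c−2, c−1)`). -/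
def IsKinkedSig (c : ℕ) {m : ℕ} (σ : Fin m → VState) : Prop :=
  ∀ i : Fin m, ∀ h : (i : ℕ) + 1 < m, (i : ℕ) ≠ c - 2 →
    ¬(σ i = VState.unc ∧ σ ⟨(i : ℕ) + 1, h⟩ = VState.occ) ∧
    ¬(σ i = VState.occ ∧ σ ⟨(i : ℕ) + 1, h⟩ = VState.unc)

/-- `a_c(m)`: the number of kinked signatures of length `m` with kink at position `c`. -/
noncomputable def numKinkedSig (c m : ℕ) : ℕ :=
  Fintype.card {σ : Fin m → VState // IsKinkedSig c σ}

def Allowed (c n : ℕ) (t s : VState) : Prop :=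
  n ≠ c - 2 →
    ¬(t = VState.unc ∧ s = VState.occ) ∧ ¬(t = VState.occ ∧ s = VState.unc)

lemma isKinkedSig_iff (c n : ℕ) (σ : Fin (n+1) → VState) :
    IsKinkedSig c σ ↔ ∀ i : Fin n, (i : ℕ) ≠ c - 2 →
      ¬(σ i.castSucc = VState.unc ∧ σ i.succ = VState.occ) ∧
      ¬(σ i.castSucc = VState.occ ∧ σ i.succ = VState.unc) := by
  constructor
  · intro h i hi
    exact h i.castSucc (Nat.succ_lt_succ i.isLt) hi
  · intro h i hlt hi
    exact h ⟨(i : ℕ), by omega⟩ hi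

lemma isKinkedSig_snoc_iff (c n : ℕ) (τ : Fin (n+1) → VState) (s : VState) :
    IsKinkedSig c (Fin.snoc τ s) ↔
      IsKinkedSig c τ ∧ Allowed c n (τ (Fin.last n)) s := by
  rw [isKinkedSig_iff, isKinkedSig_iff]
  constructor
  · intro h
    refine ⟨fun i hi => ?_, fun hne => ?_⟩
    · have := h i.castSucc (by simpa using hi)
      simpa [Fin.succ_castSucc, -Fin.castSucc_succ] using this
    · have := h (Fin.last n) (by simpa using hne)
      simpa [Fin.succ_last] using this
  · rintro ⟨h1, h2⟩ i hi
    induction i using Fin.lastCases with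
    | last =>
        have := h2 (by simpa using hi)
        simpa [Fin.succ_last] using this
    | cast j =>
        have := h1 j (by simpa using hi)
        simpa [Fin.succ_castSucc, -Fin.castSucc_succ] using this

noncomputable def snocEquiv (c n : ℕ) :
    {σ : Fin (n+2) → VState // IsKinkedSig c σ} ≃
      Σ τ : {τ : Fin (n+1) → VState // IsKinkedSig c τ},
        {s : VState // Allowed c n (τ.1 (Fin.last n)) s} where
  toFun σ :=
    ⟨⟨Fin.init σ.1, by
        have h := σ.2
        rw [← Fin.snoc_init_self σ.1, isKinkedSig_snoc_iff] at h
        exact h.1⟩,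
     ⟨σ.1 (Fin.last (n+1)), by
        have h := σ.2
        rw [← Fin.snoc_init_self σ.1, isKinkedSig_snoc_iff] at h
        exact h.2⟩⟩
  invFun p := ⟨Fin.snoc p.1.1 p.2.1, (isKinkedSig_snoc_iff c n p.1.1 p.2.1).mpr ⟨p.1.2, p.2.2⟩⟩
  left_inv σ := Subtype.ext (Fin.snoc_init_self σ.1)
  right_inv p := by
    rcases p with ⟨⟨τ, hτ⟩, ⟨s, hs⟩⟩
    have h1 : Fin.init (Fin.snoc τ s : Fin (n+2) → VState) = τ := by simp
    have h2 : (Fin.snoc τ s : Fin (n+2) → VState) (Fin.last (n+1)) = s := by simp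
    refine Sigma.ext (Subtype.ext h1) ?_
    rw [Subtype.heq_iff_coe_eq (fun x => by simp only [h1])]
    exact h2

noncomputable def covEquiv (c n : ℕ) :
    {τ : Fin (n+2) → VState //
        IsKinkedSig c τ ∧ τ (Fin.last (n+1)) = VState.cov} ≃
      {σ : Fin (n+1) → VState // IsKinkedSig c σ} where
  toFun τ := ⟨Fin.init τ.1, by
      have h := τ.2.1
      rw [← Fin.snoc_init_self τ.1, isKinkedSig_snoc_iff] at h
      exact h.1⟩
  invFun σ := ⟨Fin.snoc σ.1 VState.cov,
    (isKinkedSig_snoc_iff c n σ.1 VState.cov).mpr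
      ⟨σ.2, fun _ => by simp⟩, by simp⟩
  left_inv τ := Subtype.ext (by
    conv_rhs => rw [← Fin.snoc_init_self τ.1]
    rw [τ.2.2])
  right_inv σ := Subtype.ext (by simp)

lemma card_allowed_kink (c n : ℕ) (t : VState) (h : n = c - 2) :
    Fintype.card {s : VState // Allowed c n t s} = 3 := by
  have e : {s : VState // Allowed c n t s} ≃ VState :=
    Equiv.subtypeUnivEquiv (fun s hn => absurd h hn)
  rw [Fintype.card_congr e]; decide

lemma card_allowed_nokink (c n : ℕ) (t : VState) (h : n ≠ c - 2) :
    Fintype.card {s : VState // Allowed c n t s} =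
      2 + (if t = VState.cov then 1 else 0) := by
  cases t with
  | cov =>
      have e : {s : VState // Allowed c n VState.cov s} ≃ VState :=
        Equiv.subtypeUnivEquiv (fun s hn => by simp [Allowed])
      rw [Fintype.card_congr e]; decide
  | unc =>
      have e : {s : VState // Allowed c n VState.unc s} ≃ {s : VState // s ≠ VState.occ} :=
        Equiv.subtypeEquivRight (fun s => by
          constructor
          · intro ha; exact fun hs => (ha h).1 ⟨rfl, hs⟩
          · intro hs _; exact ⟨fun H => hs H.2, fun H => VState.noConfusion H.1⟩)
      rw [Fintype.card_congr e]
      have : Fintype.card {s : VState // s ≠ VState.occ} = 2 := by decide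
      simp [this]
  | occ =>
      have e : {s : VState // Allowed c n VState.occ s} ≃ {s : VState // s ≠ VState.unc} :=
        Equiv.subtypeEquivRight (fun s => by
          constructor
          · intro ha; exact fun hs => (ha h).2 ⟨rfl, hs⟩
          · intro hs _; exact ⟨fun H => VState.noConfusion H.1, fun H => hs H.2⟩)
      rw [Fintype.card_congr e]
      have : Fintype.card {s : VState // s ≠ VState.unc} = 2 := by decide
      simp [this]

lemma step_kink (c n : ℕ) (h : n = c - 2) :
    numKinkedSig c (n+2) = 3 * numKinkedSig c (n+1) := by
  rw [numKinkedSig, Fintype.card_congr (snocEquiv c n), Fintype.card_sigma]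
  rw [Finset.sum_congr rfl (fun τ _ => card_allowed_kink c n (τ.1 (Fin.last n)) h)]
  rw [Finset.sum_const, smul_eq_mul, Finset.card_univ, numKinkedSig, Nat.mul_comm]

lemma step_nokink (c n : ℕ) (h : n ≠ c - 2) :
    numKinkedSig c (n+2) = 2 * numKinkedSig c (n+1) +
      Fintype.card {τ : Fin (n+1) → VState //
        IsKinkedSig c τ ∧ τ (Fin.last n) = VState.cov} := by
  rw [numKinkedSig, Fintype.card_congr (snocEquiv c n), Fintype.card_sigma]
  rw [Finset.sum_congr rfl
    (fun τ _ => card_allowed_nokink c n (τ.1 (Fin.last n)) h)]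
  rw [Finset.sum_add_distrib, Finset.sum_const, smul_eq_mul, Finset.card_univ]
  congr 1
  · rw [numKinkedSig, Nat.mul_comm]
  · have e : {τ' : {τ : Fin (n+1) → VState // IsKinkedSig c τ} //
        τ'.1 (Fin.last n) = VState.cov} ≃
        {τ : Fin (n+1) → VState //
          IsKinkedSig c τ ∧ τ (Fin.last n) = VState.cov} :=
      Equiv.subtypeSubtypeEquivSubtypeInter (IsKinkedSig c)
        (fun τ => τ (Fin.last n) = VState.cov)
    rw [← Fintype.card_congr e, Fintype.card_subtype, Finset.card_filter]

/-- Fix `c ≥ 2`. For all `m ≥ 3`: if `m = c` then `a_c(m) = 3·a_c(m−1)`, and if `m ≠ c`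
then `a_c(m) = 2·a_c(m−1) + a_c(m−2)`. -/
theorem numKinkedSig_recurrence (c : ℕ) (hc : 2 ≤ c) :
    ∀ m : ℕ, 3 ≤ m →
      (m = c → numKinkedSig c m = 3 * numKinkedSig c (m - 1)) ∧
      (m ≠ c → numKinkedSig c m = 2 * numKinkedSig c (m - 1) + numKinkedSig c (m - 2)) := by

  intro m hm
  obtain ⟨k, rfl⟩ : ∃ k, m = k + 3 := ⟨m - 3, by omega⟩
  constructor
  · intro hmc
    have h : k + 1 = c - 2 := by omega
    have e1 : k + 1 + 2 = k + 3 := by omega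
    have e2 : k + 3 - 1 = k + 2 := by omega
    have := step_kink c (k+1) h
    rw [e1] at this
    rw [e2]
    exact this
  · intro hmc
    have h : k + 1 ≠ c - 2 := by omega
    have e1 : k + 1 + 2 = k + 3 := by omega
    have e2 : k + 3 - 1 = k + 2 := by omega
    have e3 : k + 3 - 2 = k + 1 := by omega
    have := step_nokink c (k+1) h
    rw [e1] at this
    rw [e2, e3, this, Fintype.card_congr (covEquiv c k)]
    rfl
end

section
/- The quantity sup_{m,n ≥ 1} G_{m×n}(1)^{1/(mn)} is finite (indeed at most 2, since 1 ≤ G_{m×n}(1) ≤ 2^{mn} for all m, n ≥ 1), and the limit μ = lim_{m,n→∞} G_{m×n}(1)^{1/(mn)} exists and equals this supremum; that is, G_{m×n}(1)^{1/(mn)} → sup_{m,n} G_{m×n}(1)^{1/(mn)} as min(m,n) → ∞. -/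
open scoped Classical

/-- The m×n grid graph `P_m □ P_n`. -/
def gridGraph (m n : ℕ) : SimpleGraph (Fin m × Fin n) :=
  (SimpleGraph.pathGraph m).boxProd (SimpleGraph.pathGraph n)

/-- `G_{m×n}(1)`: the total number of dominating sets of the m×n grid graph. -/
noncomputable def numDomGrid (m n : ℕ) : ℕ :=
  (Finset.univ.filter
    (fun S : Finset (Fin m × Fin n) => IsDominating (gridGraph m n) S)).card

/-- `G_{m×n}(1)^{1/(mn)}`, as a real number. -/
noncomputable def gridGrowth (m n : ℕ) : ℝ :=
  (numDomGrid m n : ℝ) ^ ((1 : ℝ) / (m * n : ℕ))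

lemma numDomGrid_pos (m n : ℕ) : 1 ≤ numDomGrid m n := by
  rw [numDomGrid, Nat.one_le_iff_ne_zero, ← Nat.pos_iff_ne_zero, Finset.card_pos]
  exact ⟨Finset.univ, by simp [IsDominating]⟩

lemma numDomGrid_le (m n : ℕ) : numDomGrid m n ≤ 2 ^ (m * n) := by
  calc numDomGrid m n ≤ (Finset.univ : Finset (Finset (Fin m × Fin n))).card :=
        Finset.card_filter_le _ _
    _ = 2 ^ (m * n) := by simp [Finset.card_univ]

lemma numDomGrid_comm (m n : ℕ) : numDomGrid m n = numDomGrid n m := by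
  classical
  rw [numDomGrid, numDomGrid]
  apply Finset.card_bij
    (fun S _ => S.map (Equiv.prodComm (Fin m) (Fin n)).toEmbedding)
  · intro S hS
    simp only [Finset.mem_filter, Finset.mem_univ, true_and] at hS ⊢
    intro v
    rcases hS (v.2, v.1) with hmem | ⟨u, hu, hadj⟩
    · left
      rw [Finset.mem_map]
      exact ⟨(v.2, v.1), hmem, rfl⟩
    · right
      refine ⟨(u.2, u.1), Finset.mem_map_of_mem _ hu, ?_⟩
      simp only [gridGraph, SimpleGraph.boxProd_adj] at hadj ⊢
      tauto
  · intro S hS T hT h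
    exact Finset.map_injective _ h
  · intro T hT
    refine ⟨T.map (Equiv.prodComm (Fin n) (Fin m)).toEmbedding, ?_, ?_⟩
    · simp only [Finset.mem_filter, Finset.mem_univ, true_and] at hT ⊢
      intro v
      rcases hT (v.2, v.1) with hmem | ⟨u, hu, hadj⟩
      · left
        rw [Finset.mem_map]
        exact ⟨(v.2, v.1), hmem, rfl⟩
      · right
        refine ⟨(u.2, u.1), Finset.mem_map_of_mem _ hu, ?_⟩
        simp only [gridGraph, SimpleGraph.boxProd_adj] at hadj ⊢
        tauto
    · rw [Finset.map_map]
      ext v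
      simp

lemma gridGraph_adj {m n : ℕ} {u v : Fin m × Fin n} :
    (gridGraph m n).Adj u v ↔
      (((u.1 : ℕ) + 1 = v.1 ∨ (v.1 : ℕ) + 1 = u.1) ∧ (u.2 : ℕ) = v.2) ∨
      (((u.2 : ℕ) + 1 = v.2 ∨ (v.2 : ℕ) + 1 = u.2) ∧ (u.1 : ℕ) = v.1) := by
  simp [gridGraph, SimpleGraph.boxProd_adj, SimpleGraph.pathGraph_adj, Fin.ext_iff]

lemma numDomGrid_superadd (m1 m2 n : ℕ) :
    numDomGrid m1 n * numDomGrid m2 n ≤ numDomGrid (m1 + m2) n := by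
  classical
  set e1 : Fin m1 × Fin n ↪ Fin (m1 + m2) × Fin n :=
    (Fin.castAddEmb m2).prodMap (Function.Embedding.refl _) with he1
  set e2 : Fin m2 × Fin n ↪ Fin (m1 + m2) × Fin n :=
    (Fin.natAddEmb m1).prodMap (Function.Embedding.refl _) with he2
  have he1v : ∀ u : Fin m1 × Fin n, ((e1 u).1 : ℕ) = u.1 ∧ ((e1 u).2 : ℕ) = u.2 := by
    intro u; simp [he1, Function.Embedding.prodMap]
  have he2v : ∀ u : Fin m2 × Fin n, ((e2 u).1 : ℕ) = m1 + u.1 ∧ ((e2 u).2 : ℕ) = u.2 := by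
    intro u; simp [he2, Function.Embedding.prodMap]
  rw [numDomGrid, numDomGrid, numDomGrid, ← Finset.card_product]
  apply Finset.card_le_card_of_injOn
    (fun p => p.1.map e1 ∪ p.2.map e2)
  · rintro ⟨S1, S2⟩ hS
    simp only [Finset.mem_coe, Finset.mem_product, Finset.mem_filter, Finset.mem_univ, true_and] at hS ⊢
    intro v
    rcases lt_or_ge (v.1 : ℕ) m1 with h | h
    · obtain ⟨h1, h2⟩ := hS
      rcases h1 (⟨v.1, h⟩, v.2) with hmem | ⟨u, hu, hadj⟩
      · left
        apply Finset.mem_union_left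
        rw [Finset.mem_map]
        exact ⟨_, hmem, by apply Prod.ext <;> simp [he1, Function.Embedding.prodMap, Fin.ext_iff]⟩
      · right
        refine ⟨e1 u, Finset.mem_union_left _ (Finset.mem_map_of_mem _ hu), ?_⟩
        rw [gridGraph_adj] at hadj ⊢
        obtain ⟨a1, a2⟩ := he1v u
        simp only [a1, a2] at *
        omega
    · obtain ⟨h1, h2⟩ := hS
      have hv : (v.1 : ℕ) - m1 < m2 := by omega
      rcases h2 (⟨(v.1 : ℕ) - m1, hv⟩, v.2) with hmem | ⟨u, hu, hadj⟩
      · left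
        apply Finset.mem_union_right
        rw [Finset.mem_map]
        refine ⟨_, hmem, ?_⟩
        apply Prod.ext
        · have := (he2v (⟨(v.1 : ℕ) - m1, hv⟩, v.2)).1
          simp only [Fin.ext_iff, this]
          omega
        · simp [he2, Function.Embedding.prodMap]
      · right
        refine ⟨e2 u, Finset.mem_union_right _ (Finset.mem_map_of_mem _ hu), ?_⟩
        rw [gridGraph_adj] at hadj ⊢
        obtain ⟨a1, a2⟩ := he2v u
        simp only [a1, a2] at *
        omega
  · rintro ⟨S1, S2⟩ - ⟨T1, T2⟩ - h
    simp only at h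
    have key : ∀ (A : Finset (Fin m1 × Fin n)) (B : Finset (Fin m2 × Fin n)),
        (A.map e1 ∪ B.map e2).filter (fun v => (v.1 : ℕ) < m1) = A.map e1 := by
      intro A B
      ext v
      simp only [Finset.mem_filter, Finset.mem_union, Finset.mem_map]
      constructor
      · rintro ⟨⟨a, ha, rfl⟩ | ⟨a, ha, rfl⟩, hlt⟩
        · exact ⟨a, ha, rfl⟩
        · exact absurd hlt (by have := (he2v a).1; omega)
      · rintro ⟨a, ha, rfl⟩
        exact ⟨Or.inl ⟨a, ha, rfl⟩, by have := (he1v a).1; omega⟩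
    have h1 : S1.map e1 = T1.map e1 := by
      rw [← key S1 S2, ← key T1 T2, h]
    have h2 : S2.map e2 = T2.map e2 := by
      have key2 : ∀ (A : Finset (Fin m1 × Fin n)) (B : Finset (Fin m2 × Fin n)),
          (A.map e1 ∪ B.map e2).filter (fun v => ¬ (v.1 : ℕ) < m1) = B.map e2 := by
        intro A B
        ext v
        simp only [Finset.mem_filter, Finset.mem_union, Finset.mem_map]
        constructor
        · rintro ⟨⟨a, ha, rfl⟩ | ⟨a, ha, rfl⟩, hlt⟩
          · exact absurd (by have := (he1v a).1; omega) hlt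
          · exact ⟨a, ha, rfl⟩
        · rintro ⟨a, ha, rfl⟩
          exact ⟨Or.inr ⟨a, ha, rfl⟩, by have := (he2v a).1; omega⟩
      rw [← key2 S1 S2, ← key2 T1 T2, h]
    exact Prod.ext (Finset.map_injective e1 h1) (Finset.map_injective e2 h2)

noncomputable def bG (m n : ℕ) : ℝ := Real.log (numDomGrid m n)

lemma bG_nonneg (m n : ℕ) : 0 ≤ bG m n :=
  Real.log_nonneg (by exact_mod_cast numDomGrid_pos m n)

lemma bG_le (m n : ℕ) : bG m n ≤ (m * n : ℕ) * Real.log 2 := by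
  rw [bG, ← Real.log_pow]
  apply Real.log_le_log (by exact_mod_cast numDomGrid_pos m n)
  exact_mod_cast numDomGrid_le m n

lemma bG_superadd (m1 m2 n : ℕ) : bG m1 n + bG m2 n ≤ bG (m1 + m2) n := by
  have h1 : (0:ℝ) < numDomGrid m1 n := by exact_mod_cast numDomGrid_pos m1 n
  have h2 : (0:ℝ) < numDomGrid m2 n := by exact_mod_cast numDomGrid_pos m2 n
  rw [bG, bG, bG, ← Real.log_mul h1.ne' h2.ne']
  apply Real.log_le_log (by positivity)
  exact_mod_cast numDomGrid_superadd m1 m2 n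

lemma bG_superadd' (m n1 n2 : ℕ) : bG m n1 + bG m n2 ≤ bG m (n1 + n2) := by
  have := bG_superadd n1 n2 m
  simpa [bG, numDomGrid_comm m] using this

lemma bG_mono (m m' n : ℕ) (h : m ≤ m') : bG m n ≤ bG m' n := by
  obtain ⟨k, rfl⟩ := Nat.exists_eq_add_of_le h
  have := bG_superadd m k n
  have := bG_nonneg k n
  linarith

lemma bG_mono' (m n n' : ℕ) (h : n ≤ n') : bG m n ≤ bG m n' := by
  have := bG_mono n n' m h
  simpa [bG, numDomGrid_comm m] using this

lemma bG_iter (q m0 n : ℕ) : q * bG m0 n ≤ bG (q * m0) n := by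
  induction q with
  | zero => simpa using bG_nonneg 0 n
  | succ q ih =>
    have := bG_superadd (q * m0) m0 n
    have : bG (q * m0) n + bG m0 n ≤ bG ((q + 1) * m0) n := by
      rwa [Nat.succ_mul]
    push_cast
    linarith

lemma bG_iter' (s m n0 : ℕ) : s * bG m n0 ≤ bG m (s * n0) := by
  have := bG_iter s n0 m
  simpa [bG, numDomGrid_comm m] using this

noncomputable def cG (m n : ℕ) : ℝ := bG m n / ((m : ℝ) * n)

lemma cG_le (m n : ℕ) (hm : 1 ≤ m) (hn : 1 ≤ n) : cG m n ≤ Real.log 2 := by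
  have hmn : (0:ℝ) < (m:ℝ) * n := by positivity
  rw [cG, div_le_iff₀ hmn]
  calc bG m n ≤ (m * n : ℕ) * Real.log 2 := bG_le m n
    _ = Real.log 2 * ((m:ℝ) * n) := by push_cast; ring

lemma cG_nonneg (m n : ℕ) : 0 ≤ cG m n := by
  rw [cG]
  apply div_nonneg (bG_nonneg m n) (by positivity)

lemma cG_key (m0 n0 m n : ℕ) (hm0 : 1 ≤ m0) (hn0 : 1 ≤ n0) (hm : m0 ≤ m) (hn : n0 ≤ n) :
    cG m0 n0 - ((m0:ℝ)/m + (n0:ℝ)/n) * Real.log 2 ≤ cG m n := by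
  have hm1 : 1 ≤ m := le_trans hm0 hm
  have hn1 : 1 ≤ n := le_trans hn0 hn
  set q := m / m0 with hq
  set s := n / n0 with hs
  have hqm2 : q * m0 ≤ m := Nat.div_mul_le_self m m0
  have hsn2 : s * n0 ≤ n := Nat.div_mul_le_self n n0
  have hmR : (0:ℝ) < m := by exact_mod_cast hm1
  have hnR : (0:ℝ) < n := by exact_mod_cast hn1
  have hm0R : (0:ℝ) < m0 := by exact_mod_cast hm0
  have hn0R : (0:ℝ) < n0 := by exact_mod_cast hn0
  have hqml : (m:ℝ) - m0 ≤ (q:ℝ) * m0 := by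
    have h3 : m0 * q + m % m0 = m := by rw [hq]; exact Nat.div_add_mod m m0
    have h2 : m % m0 < m0 := Nat.mod_lt _ (by omega)
    have h3' : (m0:ℝ) * q + ((m % m0 : ℕ):ℝ) = m := by exact_mod_cast h3
    have h2' : ((m % m0 : ℕ):ℝ) < m0 := by exact_mod_cast h2
    linarith
  have hsnl : (n:ℝ) - n0 ≤ (s:ℝ) * n0 := by
    have h3 : n0 * s + n % n0 = n := by rw [hs]; exact Nat.div_add_mod n n0
    have h2 : n % n0 < n0 := Nat.mod_lt _ (by omega)
    have h3' : (n0:ℝ) * s + ((n % n0 : ℕ):ℝ) = n := by exact_mod_cast h3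
    have h2' : ((n % n0 : ℕ):ℝ) < n0 := by exact_mod_cast h2
    linarith
  have key : (q:ℝ) * s * bG m0 n0 ≤ bG m n := by
    calc (q:ℝ) * s * bG m0 n0 = (q:ℝ) * ((s:ℝ) * bG m0 n0) := by ring
      _ ≤ (q:ℝ) * bG m0 (s * n0) := by
          apply mul_le_mul_of_nonneg_left (bG_iter' s m0 n0) (by positivity)
      _ ≤ bG (q * m0) (s * n0) := bG_iter q m0 (s * n0)
      _ ≤ bG m (s * n0) := bG_mono _ _ _ hqm2
      _ ≤ bG m n := bG_mono' _ _ _ hsn2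
  have c0le : cG m0 n0 ≤ Real.log 2 := cG_le m0 n0 hm0 hn0
  have c0nn : 0 ≤ cG m0 n0 := cG_nonneg m0 n0
  have hb0 : bG m0 n0 = cG m0 n0 * ((m0:ℝ) * n0) := by
    rw [cG, div_mul_cancel₀]
    positivity
  set c0 := cG m0 n0 with hc0
  rw [cG, le_div_iff₀ (by positivity)]
  have key2 : ((m:ℝ) - m0) * ((n:ℝ) - n0) * c0 ≤ bG m n := by
    calc ((m:ℝ) - m0) * ((n:ℝ) - n0) * c0
        ≤ ((q:ℝ) * m0) * ((s:ℝ) * n0) * c0 := by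
          apply mul_le_mul_of_nonneg_right _ c0nn
          have hm0m : (m0:ℝ) ≤ m := by exact_mod_cast hm
          apply mul_le_mul hqml hsnl (by linarith [(show (n0:ℝ) ≤ n by exact_mod_cast hn)]) (by positivity)
      _ = (q:ℝ) * s * bG m0 n0 := by rw [hb0]; ring
      _ ≤ bG m n := key
  have hlog2 : (0:ℝ) ≤ Real.log 2 := Real.log_nonneg one_le_two
  have expand : (c0 - ((m0:ℝ)/m + (n0:ℝ)/n) * Real.log 2) * ((m:ℝ) * n)
      ≤ ((m:ℝ) - m0) * ((n:ℝ) - n0) * c0 := by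
    have h1 : ((m0:ℝ)/m) * ((m:ℝ) * n) = (m0:ℝ) * n := by field_simp
    have h2 : ((n0:ℝ)/n) * ((m:ℝ) * n) = (n0:ℝ) * m := by field_simp
    have hm0m : (m0:ℝ) ≤ m := by exact_mod_cast hm
    have hn0n : (n0:ℝ) ≤ n := by exact_mod_cast hn
    nlinarith [mul_nonneg hm0R.le hn0R.le, mul_nonneg (mul_nonneg hm0R.le hn0R.le) c0nn,
      mul_le_mul_of_nonneg_left c0le (mul_nonneg hm0R.le hnR.le),
      mul_le_mul_of_nonneg_left c0le (mul_nonneg hn0R.le hmR.le)]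
  linarith

lemma gridGrowth_eq (m n : ℕ) (hm : 1 ≤ m) (hn : 1 ≤ n) :
    gridGrowth m n = Real.exp (cG m n) := by
  have hpos : (0:ℝ) < numDomGrid m n := by exact_mod_cast numDomGrid_pos m n
  rw [gridGrowth, Real.rpow_def_of_pos hpos, cG, bG, mul_one_div, Nat.cast_mul]

/-- `1 ≤ G_{m×n}(1) ≤ 2^{mn}`, hence `G_{m×n}(1)^{1/(mn)} ≤ 2` and the supremum
`sup_{m,n ≥ 1} G_{m×n}(1)^{1/(mn)}` is finite; moreover
`G_{m×n}(1)^{1/(mn)}` tends to this supremum as `min(m,n) → ∞`. -/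
theorem gridGrowth_tendsto_sSup :
    (∀ m n : ℕ, 1 ≤ m → 1 ≤ n →
      1 ≤ numDomGrid m n ∧ numDomGrid m n ≤ 2 ^ (m * n) ∧ gridGrowth m n ≤ 2) ∧
    BddAbove {x : ℝ | ∃ m n : ℕ, 1 ≤ m ∧ 1 ≤ n ∧ x = gridGrowth m n} ∧
    Filter.Tendsto (fun p : ℕ × ℕ => gridGrowth p.1 p.2)
      (Filter.atTop ×ˢ Filter.atTop)
      (nhds (sSup {x : ℝ | ∃ m n : ℕ, 1 ≤ m ∧ 1 ≤ n ∧ x = gridGrowth m n})) := by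
  have hgle : ∀ m n : ℕ, 1 ≤ m → 1 ≤ n → gridGrowth m n ≤ 2 := by
    intro m n hm hn
    rw [gridGrowth_eq m n hm hn]
    calc Real.exp (cG m n) ≤ Real.exp (Real.log 2) :=
          Real.exp_le_exp.mpr (cG_le m n hm hn)
      _ = 2 := Real.exp_log two_pos
  set Alog : Set ℝ := {x | ∃ m n : ℕ, 1 ≤ m ∧ 1 ≤ n ∧ x = cG m n} with hAlog
  have hAne : Alog.Nonempty := ⟨cG 1 1, 1, 1, le_refl 1, le_refl 1, rfl⟩
  have hAbdd : BddAbove Alog := by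
    refine ⟨Real.log 2, ?_⟩
    rintro x ⟨m, n, hm, hn, rfl⟩
    exact cG_le m n hm hn
  set L := sSup Alog with hL
  -- the set of gridGrowth values is exp '' Alog
  have hset : {x : ℝ | ∃ m n : ℕ, 1 ≤ m ∧ 1 ≤ n ∧ x = gridGrowth m n} = Real.exp '' Alog := by
    ext x
    constructor
    · rintro ⟨m, n, hm, hn, rfl⟩
      exact ⟨cG m n, ⟨m, n, hm, hn, rfl⟩, (gridGrowth_eq m n hm hn).symm⟩
    · rintro ⟨y, ⟨m, n, hm, hn, rfl⟩, rfl⟩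
      exact ⟨m, n, hm, hn, (gridGrowth_eq m n hm hn).symm⟩
  have hexpL : Real.exp L = sSup (Real.exp '' Alog) :=
    Monotone.map_csSup_of_continuousAt Real.continuous_exp.continuousAt
      Real.exp_monotone hAne hAbdd
  -- tendsto of cG
  have hc : Filter.Tendsto (fun p : ℕ × ℕ => cG p.1 p.2)
      (Filter.atTop ×ˢ Filter.atTop) (nhds L) := by
    rw [Filter.prod_atTop_atTop_eq, Metric.tendsto_atTop]
    intro ε hε
    obtain ⟨x, hxA, hx⟩ := exists_lt_of_lt_csSup hAne
      (show L - ε/2 < L by linarith)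
    obtain ⟨m0, n0, hm0, hn0, rfl⟩ := hxA
    obtain ⟨K0, hK0⟩ := exists_nat_gt (((m0:ℝ) + n0) * Real.log 2 / (ε/2))
    refine ⟨(K0 + m0 + n0 + 1, K0 + m0 + n0 + 1), ?_⟩
    rintro ⟨m, n⟩ hmn
    rw [ge_iff_le, Prod.mk_le_mk] at hmn
    obtain ⟨hm, hn⟩ := hmn
    have hm1 : 1 ≤ m := by omega
    have hn1 : 1 ≤ n := by omega
    have h1 : cG m n ≤ L := le_csSup hAbdd ⟨m, n, hm1, hn1, rfl⟩
    have h2 := cG_key m0 n0 m n hm0 hn0 (by omega) (by omega)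
    have hKR : ((K0:ℝ) + m0 + n0 + 1) ≤ m := by exact_mod_cast hm
    have hKR' : ((K0:ℝ) + m0 + n0 + 1) ≤ n := by exact_mod_cast hn
    have hKpos : (0:ℝ) < (K0:ℝ) + m0 + n0 + 1 := by positivity
    have hmR : (0:ℝ) < m := by exact_mod_cast hm1
    have hnR : (0:ℝ) < n := by exact_mod_cast hn1
    have hlog2 : (0:ℝ) ≤ Real.log 2 := Real.log_nonneg one_le_two
    set K : ℝ := (K0:ℝ) + m0 + n0 + 1 with hK
    have hd1 : (m0:ℝ)/m ≤ (m0:ℝ)/K :=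
      div_le_div_of_nonneg_left (by positivity) hKpos hKR
    have hd2 : (n0:ℝ)/n ≤ (n0:ℝ)/K :=
      div_le_div_of_nonneg_left (by positivity) hKpos hKR'
    have h3 : ((m0:ℝ)/m + (n0:ℝ)/n) * Real.log 2 < ε/2 := by
      have hsum : ((m0:ℝ)/m + (n0:ℝ)/n) * Real.log 2
          ≤ (((m0:ℝ) + n0) / K) * Real.log 2 := by
        apply mul_le_mul_of_nonneg_right _ hlog2
        rw [add_div]
        exact add_le_add hd1 hd2
      have hK0K : (K0:ℝ) ≤ K := by
        rw [hK]
        have h1 : (0:ℝ) ≤ (m0:ℝ) := Nat.cast_nonneg m0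
        have h2 : (0:ℝ) ≤ (n0:ℝ) := Nat.cast_nonneg n0
        linarith
      have hnum : ((m0:ℝ) + n0) * Real.log 2 < K * (ε/2) := by
        have ha := (div_lt_iff₀ (by linarith : (0:ℝ) < ε/2)).mp hK0
        have hb : (K0:ℝ) * (ε/2) ≤ K * (ε/2) :=
          mul_le_mul_of_nonneg_right hK0K (by linarith)
        linarith
      have hc' : (((m0:ℝ) + n0)/K) * Real.log 2 < ε/2 := by
        rw [div_mul_eq_mul_div, div_lt_iff₀ hKpos]
        calc ((m0:ℝ) + n0) * Real.log 2 < K * (ε/2) := hnum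
          _ = ε/2 * K := mul_comm _ _
      linarith
    have h4 : L - ε < cG m n := by linarith
    rw [Real.dist_eq, abs_lt]
    constructor <;> linarith
  -- conclude
  refine ⟨fun m n hm hn => ⟨numDomGrid_pos m n, numDomGrid_le m n, hgle m n hm hn⟩, ?_, ?_⟩
  · refine ⟨2, ?_⟩
    rintro x ⟨m, n, hm, hn, rfl⟩
    exact hgle m n hm hn
  · rw [hset, ← hexpL]
    have h := (Real.continuous_exp.continuousAt.tendsto).comp hc
    apply h.congr'
    have hev : ∀ᶠ p : ℕ × ℕ in Filter.atTop ×ˢ Filter.atTop, 1 ≤ p.1 ∧ 1 ≤ p.2 := by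
      rw [Filter.prod_atTop_atTop_eq, Filter.eventually_atTop]
      exact ⟨(1, 1), fun p hp => ⟨hp.1, hp.2⟩⟩
    filter_upwards [hev] with p hp
    exact (gridGrowth_eq p.1 p.2 hp.1 hp.2).symm
end
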